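/- The category of graphs is complete and cocomplete: the category whose objects are graphs, whose morphisms are graph maps, and whose identities and composition are those of underlying functions has all small limits and all small colimits. -/

import Mathlib

open CategoryTheory CategoryTheory.Limits

universe u

/-- A map of simple graphs: adjacent vertices are sent to equal or adjacent vertices. -/
def IsGraphMap {V W : Type*} (G : SimpleGraph V) (H : SimpleGraph W) (f : V → W) : Prop :=
  ∀ ⦃v w : V⦄, G.Adj v w → f v = f w ∨ H.Adj (f v) (f w)

/-- An object of the category of graphs: a type of vertices together with a simple graph
structure on it. -/
structure GraphObj : Type (u + 1) where
  carrier : Type u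
  graph : SimpleGraph carrier

/-- The category of graphs: morphisms are graph maps, identities and composition are those
of the underlying functions. -/
instance : Category.{u} GraphObj.{u} where
  Hom A B := {f : A.carrier → B.carrier // IsGraphMap A.graph B.graph f}
  id A := ⟨id, fun v w h => Or.inr h⟩
  comp f g := ⟨g.1 ∘ f.1, fun v w h => by
    rcases f.2 h with he | ha
    · exact Or.inl (congrArg g.1 he)
    · exact g.2 ha⟩
  id_comp f := Subtype.ext rfl
  comp_id f := Subtype.ext rfl
  assoc f g h := Subtype.ext rfl

section Aux

variable {J : Type u} [Category.{u} J] (F : J ⥤ GraphObj.{u})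

/-- Carrier of the limit: compatible families. -/
def limCarrier : Type u :=
  { s : ∀ j, (F.obj j).carrier // ∀ {j j' : J} (f : j ⟶ j'), (F.map f).1 (s j) = s j' }

/-- Graph structure on the limit carrier. -/
def limGraph : SimpleGraph (limCarrier F) where
  Adj x y := x ≠ y ∧ ∀ j, x.1 j = y.1 j ∨ (F.obj j).graph.Adj (x.1 j) (y.1 j)
  symm := ⟨fun x y ⟨hne, h⟩ =>
    ⟨hne.symm, fun j => (h j).imp Eq.symm fun h' => h'.symm⟩⟩
  loopless := ⟨fun x ⟨hne, _⟩ => hne rfl⟩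

/-- The limit cone. -/
def limCone : Cone F where
  pt := ⟨limCarrier F, limGraph F⟩
  π :=
    { app := fun j => ⟨fun s => s.1 j, fun x y h => h.2 j⟩
      naturality := fun j j' f => by
        apply Subtype.ext
        funext s
        exact (s.2 f).symm }

/-- The lift into the limit cone. -/
def limLift (c : Cone F) : c.pt ⟶ (limCone F).pt := by
  classical
  refine ⟨fun v => ⟨fun j => (c.π.app j).1 v,
    fun {j j'} f => congrFun (congrArg Subtype.val (c.w f)) v⟩, ?_⟩
  intro v w h
  by_cases heq : (⟨fun j => (c.π.app j).1 v, fun {j j'} f =>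
      congrFun (congrArg Subtype.val (c.w f)) v⟩ : limCarrier F) =
      ⟨fun j => (c.π.app j).1 w, fun {j j'} f =>
      congrFun (congrArg Subtype.val (c.w f)) w⟩
  · exact Or.inl heq
  · exact Or.inr ⟨heq, fun j => (c.π.app j).2 h⟩

/-- The limit cone is a limit. -/
def limIsLimit : IsLimit (limCone F) where
  lift := limLift F
  fac c j := Subtype.ext rfl
  uniq c m hm := Subtype.ext (funext fun v => Subtype.ext (funext fun j =>
    congrFun (congrArg Subtype.val (hm j)) v))

/-- The relation generating the colimit. -/
def colimRel : (Σ j : J, (F.obj j).carrier) → (Σ j : J, (F.obj j).carrier) → Prop :=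
  fun p q => ∃ f : p.1 ⟶ q.1, (F.map f).1 p.2 = q.2

/-- Carrier of the colimit. -/
def colimCarrier : Type u := Quot (colimRel F)

/-- Graph structure on the colimit carrier. -/
def colimGraph : SimpleGraph (colimCarrier F) where
  Adj a b := a ≠ b ∧ ∃ (j : J) (x y : (F.obj j).carrier), (F.obj j).graph.Adj x y ∧
    Quot.mk _ ⟨j, x⟩ = a ∧ Quot.mk _ ⟨j, y⟩ = b
  symm := ⟨fun a b ⟨hne, j, x, y, hxy, ha, hb⟩ =>
    ⟨hne.symm, j, y, x, hxy.symm, hb, ha⟩⟩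
  loopless := ⟨fun a ⟨hne, _⟩ => hne rfl⟩

/-- The colimit cocone. -/
def colimCocone : Cocone F where
  pt := ⟨colimCarrier F, colimGraph F⟩
  ι :=
    { app := fun j => by
        classical
        refine ⟨fun x => Quot.mk _ ⟨j, x⟩, ?_⟩
        intro x y h
        by_cases heq : (Quot.mk (colimRel F) ⟨j, x⟩) = Quot.mk _ ⟨j, y⟩
        · exact Or.inl heq
        · exact Or.inr ⟨heq, j, x, y, h, rfl, rfl⟩
      naturality := fun j j' f => by
        apply Subtype.ext
        funext x
        exact (Quot.sound ⟨f, rfl⟩ :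
          Quot.mk (colimRel F) ⟨j, x⟩ = Quot.mk _ ⟨j', (F.map f).1 x⟩).symm }

/-- The descent out of the colimit cocone. -/
def colimDesc (c : Cocone F) : (colimCocone F).pt ⟶ c.pt := by
  refine ⟨Quot.lift (fun p => (c.ι.app p.1).1 p.2) ?_, ?_⟩
  · rintro p q ⟨f, hf⟩
    have h := congrFun (congrArg Subtype.val (c.w f)) p.2
    exact h.symm.trans (congrArg (c.ι.app q.1).1 hf)
  · rintro a b ⟨hne, j, x, y, hxy, ha, hb⟩
    subst ha; subst hb
    exact (c.ι.app j).2 hxy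

/-- The colimit cocone is a colimit. -/
def colimIsColimit : IsColimit (colimCocone F) where
  desc := colimDesc F
  fac c j := Subtype.ext rfl
  uniq c m hm := by
    apply Subtype.ext
    funext a
    induction a using Quot.ind with
    | _ p => exact congrFun (congrArg Subtype.val (hm p.1)) p.2

end Aux

instance : HasLimits GraphObj.{u} where
  has_limits_of_shape J _ :=
    { has_limit := fun F => HasLimit.mk ⟨limCone F, limIsLimit F⟩ }

instance : HasColimits GraphObj.{u} where
  has_colimits_of_shape J _ :=
    { has_colimit := fun F => HasColimit.mk ⟨colimCocone F, colimIsColimit F⟩ }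

/-- The category of graphs is complete and cocomplete: it has all small limits and all
small colimits. -/
theorem graph_complete_cocomplete :
    HasLimits GraphObj.{u} ∧ HasColimits GraphObj.{u} := by
  exact ⟨inferInstance, inferInstance⟩
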